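/- arXiv:1403.4325 — 2 statements merged into one kernel-verified Lean document; each statement's English description precedes it below -/
import Mathlib

section
/- Let R be a commutative ring and let F : ModuleCat R ⥤ ModuleCat R be an additive, R-linear functor that preserves all small colimits. Then F is naturally isomorphic to the functor sending an R-module M to M ⊗[R] F(R), i.e. F ≅ tensorRight (F.obj R). (Eilenberg–Watts theorem; this is the classical form of the paper's Proposition 3.1 characterizing colimit-preserving functors between module categories as tensoring with the value on the free rank-one module.) -/
open CategoryTheory CategoryTheory.Limits CategoryTheory.MonoidalCategory

section EW

variable {R : Type} [CommRing R] {F G : ModuleCat R ⥤ ModuleCat R}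
  [F.Additive] [F.Linear R] (adj : F ⊣ G)

/-- The identification of the right adjoint of `F` with the hom functor out of `F R`. -/
noncomputable def ewEquiv (N : ModuleCat R) :
    G.obj N ≃ₗ[R] (F.obj (ModuleCat.of R R) →ₗ[R] N) where
  toFun y := ((adj.homEquiv (ModuleCat.of R R) N).symm
    (ModuleCat.ofHom (LinearMap.toSpanSingleton R (G.obj N) y))).hom
  invFun φ := adj.homEquiv (ModuleCat.of R R) N (ModuleCat.ofHom φ) (1 : R)
  left_inv y := by
    show (adj.homEquiv (ModuleCat.of R R) N
      (ModuleCat.ofHom ((adj.homEquiv (ModuleCat.of R R) N).symm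
        (ModuleCat.ofHom (LinearMap.toSpanSingleton R (G.obj N) y))).hom)) (1 : R) = y
    rw [ModuleCat.ofHom_hom, Equiv.apply_symm_apply]
    exact LinearMap.toSpanSingleton_apply_one R (G.obj N) y
  right_inv φ := by
    have h : ModuleCat.ofHom (LinearMap.toSpanSingleton R (G.obj N)
        (adj.homEquiv (ModuleCat.of R R) N (ModuleCat.ofHom φ) (1 : R)))
        = adj.homEquiv (ModuleCat.of R R) N (ModuleCat.ofHom φ) := by
      ext
      exact LinearMap.toSpanSingleton_apply_one R (G.obj N) _
    show ((adj.homEquiv (ModuleCat.of R R) N).symm _).hom = φ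
    rw [h, Equiv.symm_apply_apply]
    rfl
  map_add' y z := by
    have h : (LinearMap.toSpanSingleton R (G.obj N) (y + z))
        = LinearMap.toSpanSingleton R (G.obj N) y + LinearMap.toSpanSingleton R (G.obj N) z := by
      ext; simp
    show ((adj.homEquiv (ModuleCat.of R R) N).symm _).hom
        = ((adj.homEquiv (ModuleCat.of R R) N).symm _).hom
          + ((adj.homEquiv (ModuleCat.of R R) N).symm _).hom
    rw [h]
    simp only [Adjunction.homEquiv_counit]
    rw [ModuleCat.ofHom_add, F.map_add, Preadditive.add_comp]
    rfl
  map_smul' r y := by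
    have h : (LinearMap.toSpanSingleton R (G.obj N) (r • y))
        = r • LinearMap.toSpanSingleton R (G.obj N) y := by
      ext; simp
    show ((adj.homEquiv (ModuleCat.of R R) N).symm _).hom
        = r • ((adj.homEquiv (ModuleCat.of R R) N).symm _).hom
    rw [h]
    simp only [Adjunction.homEquiv_counit]
    rw [show ModuleCat.ofHom (r • LinearMap.toSpanSingleton R (G.obj N) y)
      = r • ModuleCat.ofHom (LinearMap.toSpanSingleton R (G.obj N) y) from rfl,
      F.map_smul, Linear.smul_comp]
    rfl

lemma ewEquiv_nat {N N' : ModuleCat R} (k : N ⟶ N') (y : G.obj N) :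
    ewEquiv adj N' (G.map k y) = k.hom.comp (ewEquiv adj N y) := by
  have h : ModuleCat.ofHom (LinearMap.toSpanSingleton R (G.obj N') (G.map k y))
      = ModuleCat.ofHom (LinearMap.toSpanSingleton R (G.obj N) y) ≫ G.map k := by
    ext; simp [LinearMap.toSpanSingleton_apply]
  show ((adj.homEquiv (ModuleCat.of R R) N').symm _).hom = _
  rw [h]
  rw [Adjunction.homEquiv_naturality_right_symm]
  rfl

/-- Tensoring with `F R` is also left adjoint to the right adjoint of `F`. -/
noncomputable def ewAdj : tensorRight (F.obj (ModuleCat.of R R)) ⊣ G :=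
  Adjunction.mkOfHomEquiv
    { homEquiv := fun M N =>
        { toFun := fun φ => ModuleCat.ofHom
            ((ewEquiv adj N).symm.toLinearMap.comp
              (TensorProduct.curry φ.hom) : M →ₗ[R] G.obj N)
          invFun := fun f => ModuleCat.ofHom (TensorProduct.lift
            ((ewEquiv adj N).toLinearMap.comp f.hom) : _ →ₗ[R] N)
          left_inv := fun φ => by
            apply ModuleCat.hom_ext
            apply TensorProduct.ext'
            intro m a
            simp
          right_inv := fun f => by
            ext m
            show (ewEquiv adj N).symm
                (TensorProduct.curry (TensorProduct.lift
                  ((ewEquiv adj N).toLinearMap.comp f.hom)) m) = f m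
            rw [LinearEquiv.symm_apply_eq]
            ext a
            simp }
      homEquiv_naturality_left_symm := fun {M' M N} g f => by
        apply ModuleCat.hom_ext
        apply TensorProduct.ext'
        intro m a
        simp only [Equiv.coe_fn_symm_mk, TensorProduct.lift.tmul, LinearMap.comp_apply,
          LinearEquiv.coe_coe, ModuleCat.hom_comp, ModuleCat.hom_whiskerRight]
        rfl
      homEquiv_naturality_right := fun {M N N'} φ k => by
        ext m
        apply (ewEquiv adj N').injective
        show (ewEquiv adj N') ((ewEquiv adj N').symm
              (TensorProduct.curry (φ ≫ k : _ ⟶ N').hom m))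
            = (ewEquiv adj N') (G.map k
              ((ewEquiv adj N).symm (TensorProduct.curry φ.hom m)))
        rw [LinearEquiv.apply_symm_apply, ewEquiv_nat adj k, LinearEquiv.apply_symm_apply]
        ext a
        simp [ModuleCat.hom_comp] }

end EW

/-- **Eilenberg–Watts**: an additive, `R`-linear, colimit-preserving endofunctor of the
category of `R`-modules is naturally isomorphic to tensoring on the right with its value
on the free rank-one module `R`. -/
theorem eilenberg_watts (R : Type) [CommRing R]
    (F : ModuleCat R ⥤ ModuleCat R) [F.Additive] [F.Linear R]
    [PreservesColimits F] :
    Nonempty (F ≅ tensorRight (F.obj (ModuleCat.of R R))) := by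
  have hsep : IsSeparator (ModuleCat.of R R) := by
    rw [Preadditive.isSeparator_iff]
    intro X Y f hf
    apply ModuleCat.hom_ext; apply LinearMap.ext
    intro x
    have h0 := hf (ModuleCat.ofHom (LinearMap.toSpanSingleton R X x))
    have h1 : f x = (ModuleCat.ofHom (LinearMap.toSpanSingleton R X x) ≫ f :
        ModuleCat.of R R ⟶ Y) (1 : R) := by
      show f x = f ((LinearMap.toSpanSingleton R X x) (1 : R))
      rw [LinearMap.toSpanSingleton_apply_one]
    rw [h1, h0]
    rfl
  haveI : Small.{0} ({ModuleCat.of R R} : Set (ModuleCat R)) := small_subsingleton _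
  haveI : F.IsLeftAdjoint :=
    isLeftAdjoint_of_preservesColimits_of_isSeparating hsep F
  exact ⟨((Adjunction.ofIsLeftAdjoint F).leftAdjointUniq (ewAdj (Adjunction.ofIsLeftAdjoint F)))⟩
end

section
/- Let R be a commutative ring and let B, B' be R-modules. The map sending a natural transformation η : tensorRight B ⟶ tensorRight B' (of endofunctors of ModuleCat R) to the R-module homomorphism B → B' obtained from its component at R, η_R : R ⊗[R] B → R ⊗[R] B', by composing with the unitor isomorphisms, is a bijection onto Hom_R(B, B'). (This is the fully-faithfulness half of the Eilenberg–Watts/Morita correspondence between bimodules and colimit-preserving functors used throughout Section 3 of the paper.) -/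
open CategoryTheory CategoryTheory.MonoidalCategory

/-- Natural transformations `tensorRight B ⟶ tensorRight B'` between right-tensoring
endofunctors of `ModuleCat R` correspond bijectively to `R`-module homomorphisms `B ⟶ B'`,
via the component at the free rank-one module `R` composed with the unitor isomorphisms. -/
theorem tensorRight_nat_trans_bijective (R : Type) [CommRing R] (B B' : ModuleCat R) :
    Function.Bijective (fun (η : tensorRight B ⟶ tensorRight B') =>
      ((λ_ B).inv ≫ η.app (𝟙_ (ModuleCat R)) ≫ (λ_ B').hom : B ⟶ B')) := by
  constructor
  · intro η η' h
    simp only at h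
    rw [Iso.cancel_iso_inv_left] at h
    have hR : η.app (𝟙_ (ModuleCat R)) = η'.app (𝟙_ (ModuleCat R)) := by
      rwa [Iso.cancel_iso_hom_right] at h
    ext M : 2
    apply ModuleCat.hom_ext
    apply TensorProduct.ext'
    intro m b
    let φ : (𝟙_ (ModuleCat R)) ⟶ M := ModuleCat.ofHom (LinearMap.toSpanSingleton R M m)
    have h1 := (elementwise_of% η.naturality φ) ((1:R) ⊗ₜ[R] b)
    have h2 := (elementwise_of% η'.naturality φ) ((1:R) ⊗ₜ[R] b)
    have hφB : (φ ▷ B) ((1:R) ⊗ₜ[R] b) = m ⊗ₜ[R] b := by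
      show (LinearMap.toSpanSingleton R M m) 1 ⊗ₜ[R] b = _
      rw [LinearMap.toSpanSingleton_apply_one]
    simp only [Functor.flip_obj_map, curriedTensor_map_app] at h1 h2
    erw [hφB] at h1 h2
    rw [hR] at h1
    exact h1.trans h2.symm
  · intro f
    refine ⟨{ app := fun M => M ◁ f, naturality := fun M N g => (whisker_exchange g f).symm }, ?_⟩
    simp [MonoidalCategory.leftUnitor_naturality]
end
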